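/- (Global convergence of PNKH-B) Suppose f : ℝⁿ → ℝ is differentiable with L-Lipschitz gradient, C is a compact box, and the sequence (x_k) ⊆ C satisfies: (i) f(x_{k+1}) ≤ f(x_k) + α ∇f(x_k)ᵀ(x_{k+1} − x_k) for a fixed α ∈ (0,1); (ii) ∇f(x_k)ᵀ(x_{k+1} − x_k) ≤ −(1/μ_k)(x_{k+1} − x_k)ᵀ H̃_k (x_{k+1} − x_k) with step sizes 0 < μ_k ≤ 1 and symmetric matrices H̃_k ⪰ sI for a fixed s > 0. Then ‖x_{k+1} − x_k‖₂ → 0 and f(x_k) converges. -/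

import Mathlib

open Matrix

lemma dot_self_eq_norm_sq {n : ℕ} (v : EuclideanSpace ℝ (Fin n)) :
    (v : Fin n → ℝ) ⬝ᵥ v = ‖v‖ ^ 2 := by
  rw [EuclideanSpace.norm_eq, Real.sq_sqrt (by positivity)]
  simp [dotProduct, sq]

/-- Global convergence core of PNKH-B: under the Armijo sufficient decrease condition
and the descent inequality with uniformly positive definite symmetric metrics
`H̃ₖ ⪰ sI`, for iterates in a compact box `C` the successive differences vanish and
the objective values converge. -/
theorem stmt10 {n : ℕ} (f : EuclideanSpace ℝ (Fin n) → ℝ)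
    (g : EuclideanSpace ℝ (Fin n) → EuclideanSpace ℝ (Fin n))
    (hg : ∀ x, HasGradientAt f (g x) x)
    (L : ℝ) (hL : 0 < L) (hlip : ∀ x y, ‖g x - g y‖ ≤ L * ‖x - y‖)
    (lo hi : Fin n → ℝ) (C : Set (EuclideanSpace ℝ (Fin n)))
    (hC : C = {v : EuclideanSpace ℝ (Fin n) | ∀ i, lo i ≤ v i ∧ v i ≤ hi i})
    (hCcompact : IsCompact C)
    (x : ℕ → EuclideanSpace ℝ (Fin n)) (hxC : ∀ k, x k ∈ C)
    (α : ℝ) (hα0 : 0 < α) (hα1 : α < 1)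
    (harmijo : ∀ k, f (x (k + 1)) ≤ f (x k) + α * (g (x k) ⬝ᵥ (x (k + 1) - x k)))
    (μ : ℕ → ℝ) (hμ0 : ∀ k, 0 < μ k) (hμ1 : ∀ k, μ k ≤ 1)
    (Ht : ℕ → Matrix (Fin n) (Fin n) ℝ) (hsym : ∀ k, (Ht k).IsSymm)
    (s : ℝ) (hs : 0 < s)
    (hpd : ∀ k, ∀ z : Fin n → ℝ, s * (z ⬝ᵥ z) ≤ z ⬝ᵥ (Ht k) *ᵥ z)
    (hdesc : ∀ k, g (x k) ⬝ᵥ (x (k + 1) - x k) ≤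
      -(1 / μ k) * ((x (k + 1) - x k) ⬝ᵥ (Ht k) *ᵥ (x (k + 1) - x k))) :
    Filter.Tendsto (fun k => ‖x (k + 1) - x k‖) Filter.atTop (nhds 0) ∧
      ∃ a : ℝ, Filter.Tendsto (fun k => f (x k)) Filter.atTop (nhds a) := by
  -- key decrease estimate
  have key : ∀ k, f (x (k + 1)) + α * s * ‖x (k + 1) - x k‖ ^ 2 ≤ f (x k) := by
    intro k
    set d : EuclideanSpace ℝ (Fin n) := x (k + 1) - x k with hd
    have hdot : (d : Fin n → ℝ) ⬝ᵥ d = ‖d‖ ^ 2 := dot_self_eq_norm_sq d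
    have h1 : s * ‖d‖ ^ 2 ≤ (d : Fin n → ℝ) ⬝ᵥ (Ht k) *ᵥ d := by
      rw [← hdot]; exact hpd k d
    have hq0 : (0:ℝ) ≤ (d : Fin n → ℝ) ⬝ᵥ (Ht k) *ᵥ d := by
      have := hpd k d
      nlinarith [dot_self_eq_norm_sq d, sq_nonneg ‖d‖]
    have hmu : (1:ℝ) ≤ 1 / μ k := by
      rw [le_div_iff₀ (hμ0 k)]; simpa using hμ1 k
    have h2 : g (x k) ⬝ᵥ (d : Fin n → ℝ) ≤ -(s * ‖d‖ ^ 2) := by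
      have := hdesc k
      rw [← WithLp.ofLp_sub, ← hd] at this
      nlinarith
    have := harmijo k
    rw [← WithLp.ofLp_sub, ← hd] at this
    nlinarith
  have hmono : Antitone fun k => f (x k) := by
    apply antitone_nat_of_succ_le
    intro k
    have := key k
    nlinarith [sq_nonneg ‖x (k + 1) - x k‖, mul_nonneg (mul_nonneg hα0.le hs.le) (sq_nonneg ‖x (k + 1) - x k‖)]
  -- f is bounded below on C
  have hcont : Continuous f := by
    have : Differentiable ℝ f := fun y => (hg y).hasFDerivAt.differentiableAt
    exact this.continuous
  have hne : C.Nonempty := ⟨x 0, hxC 0⟩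
  obtain ⟨m, hmC, hmin⟩ := hCcompact.exists_isMinOn hne hcont.continuousOn
  have hbdd : BddBelow (Set.range fun k => f (x k)) := by
    refine ⟨f m, ?_⟩
    rintro _ ⟨k, rfl⟩
    exact hmin (hxC k)
  have hconv : Filter.Tendsto (fun k => f (x k)) Filter.atTop
      (nhds (⨅ k, f (x k))) := tendsto_atTop_ciInf hmono hbdd
  refine ⟨?_, ⟨_, hconv⟩⟩
  -- differences tend to 0
  have hdiff : Filter.Tendsto (fun k => f (x k) - f (x (k + 1))) Filter.atTop (nhds 0) := by
    have h2 := hconv.comp (Filter.tendsto_add_atTop_nat 1)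
    have := hconv.sub h2
    simpa using this
  have hsq : Filter.Tendsto (fun k => ‖x (k + 1) - x k‖ ^ 2) Filter.atTop (nhds 0) := by
    have hc : (0:ℝ) < α * s := mul_pos hα0 hs
    have h1 : ∀ k, ‖x (k + 1) - x k‖ ^ 2 ≤ (f (x k) - f (x (k + 1))) / (α * s) := by
      intro k
      rw [le_div_iff₀ hc]
      nlinarith [key k]
    have h2 : Filter.Tendsto (fun k => (f (x k) - f (x (k + 1))) / (α * s))
        Filter.atTop (nhds 0) := by
      simpa using hdiff.div_const (α * s)
    exact squeeze_zero (fun k => sq_nonneg _) h1 h2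
  have := (Real.continuous_sqrt.tendsto 0).comp hsq
  simp only [Function.comp_def] at this
  rw [Real.sqrt_zero] at this
  refine this.congr fun k => ?_
  exact Real.sqrt_sq (norm_nonneg _)
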